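/- Consider a shortest-path tree T rooted at s in a graph G, and an independent set M ⊆ L_i (vertices at depth i ≥ 2 in T, with respect to the unit disk graph G). Then any parent vertex u ∈ L_{i-1} is adjacent in G to at most 4 vertices of M. -/

import Mathlib

open scoped Classical

/-- Two points in the closed unit disk around the origin that are more than `1`
apart: key inner-product inequality (`cos` of angle `< 1/2`, unscaled). -/
private lemma udg_key_ineq {z w : ℂ} (hz1 : ‖z‖ ≤ 1)
    (hw1 : ‖w‖ ≤ 1) (h : 1 < ‖z - w‖) :
    2 * (z.re * w.re + z.im * w.im) < ‖z‖ * ‖w‖ := by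
  have ha : 0 ≤ ‖z‖ := norm_nonneg z
  have hb : 0 ≤ ‖w‖ := norm_nonneg w
  have hsq : 1 < ‖z - w‖ ^ 2 := by nlinarith [norm_nonneg (z - w)]
  rw [Complex.sq_norm, Complex.normSq_apply, Complex.sub_re, Complex.sub_im] at hsq
  have haz : ‖z‖ ^ 2 = z.re * z.re + z.im * z.im := by
    rw [Complex.sq_norm, Complex.normSq_apply]
  have hbw : ‖w‖ ^ 2 = w.re * w.re + w.im * w.im := by
    rw [Complex.sq_norm, Complex.normSq_apply]
  nlinarith [mul_nonneg ha hb, mul_nonneg (sub_nonneg.2 hz1) (sub_nonneg.2 hw1),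
    mul_nonneg ha (sub_nonneg.2 hz1), mul_nonneg hb (sub_nonneg.2 hw1)]

private lemma udg_cos_arg_lt {z w : ℂ} (hz0 : z ≠ 0) (hw0 : w ≠ 0)
    (hz1 : ‖z‖ ≤ 1) (hw1 : ‖w‖ ≤ 1)
    (h : 1 < ‖z - w‖) :
    Real.cos (Complex.arg (z * (starRingEnd ℂ) w)) < 1 / 2 := by
  have hw0' : (starRingEnd ℂ) w ≠ 0 := by
    simpa using hw0
  have hg : z * (starRingEnd ℂ) w ≠ 0 := mul_ne_zero hz0 hw0'
  rw [Complex.cos_arg hg, div_lt_iff₀ ((norm_pos_iff.mpr hg))]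
  have hre : (z * (starRingEnd ℂ) w).re = z.re * w.re + z.im * w.im := by
    simp [Complex.mul_re, Complex.conj_re, Complex.conj_im]
  have habs : ‖z * (starRingEnd ℂ) w‖ = ‖z‖ * ‖w‖ := by
    simp [norm_mul, Complex.norm_conj]
  rw [hre, habs]
  have := udg_key_ineq hz1 hw1 h
  linarith

private lemma udg_cos_sub_arg_lt {z₁ z₂ q : ℂ} (h₁ : z₁ ≠ 0) (h₂ : z₂ ≠ 0)
    (hq : q ≠ 0) (hz1 : ‖z₁‖ ≤ 1) (hz2 : ‖z₂‖ ≤ 1)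
    (h : 1 < ‖z₁ - z₂‖) :
    Real.cos (Complex.arg (z₁ * (starRingEnd ℂ) q)
      - Complex.arg (z₂ * (starRingEnd ℂ) q)) < 1 / 2 := by
  have hq' : (starRingEnd ℂ) q ≠ 0 := by simpa using hq
  have hg₁ : z₁ * (starRingEnd ℂ) q ≠ 0 := mul_ne_zero h₁ hq'
  have hg₂ : z₂ * (starRingEnd ℂ) q ≠ 0 := mul_ne_zero h₂ hq'
  have ha₁ : 0 < ‖z₁ * (starRingEnd ℂ) q‖ := (norm_pos_iff.mpr hg₁)
  have ha₂ : 0 < ‖z₂ * (starRingEnd ℂ) q‖ := (norm_pos_iff.mpr hg₂)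
  rw [Real.cos_sub, Complex.cos_arg hg₁, Complex.cos_arg hg₂,
    Complex.sin_arg, Complex.sin_arg]
  set g₁ := z₁ * (starRingEnd ℂ) q
  set g₂ := z₂ * (starRingEnd ℂ) q
  have heq : g₁.re / ‖g₁‖ * (g₂.re / ‖g₂‖)
      + g₁.im / ‖g₁‖ * (g₂.im / ‖g₂‖)
      = (g₁.re * g₂.re + g₁.im * g₂.im) / (‖g₁‖ * ‖g₂‖) := by
    field_simp
  rw [heq, div_lt_iff₀ (mul_pos ha₁ ha₂)]
  have hnum : g₁.re * g₂.re + g₁.im * g₂.im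
      = (q.re * q.re + q.im * q.im) * (z₁.re * z₂.re + z₁.im * z₂.im) := by
    simp only [g₁, g₂, Complex.mul_re, Complex.mul_im, Complex.conj_re, Complex.conj_im]
    ring
  have hden : ‖g₁‖ * ‖g₂‖
      = (‖z₁‖ * ‖z₂‖) * (q.re * q.re + q.im * q.im) := by
    have : ‖q‖ * ‖q‖ = q.re * q.re + q.im * q.im := by
      rw [← Complex.normSq_apply, ← Complex.sq_norm]; ring
    simp only [g₁, g₂, norm_mul, Complex.norm_conj]
    rw [← this]; ring
  have hqq : 0 < q.re * q.re + q.im * q.im := by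
    have : ‖q‖ * ‖q‖ = q.re * q.re + q.im * q.im := by
      rw [← Complex.normSq_apply, ← Complex.sq_norm]; ring
    rw [← this]
    exact mul_pos ((norm_pos_iff.mpr hq)) ((norm_pos_iff.mpr hq))
  rw [hnum, hden]
  have := udg_key_ineq hz1 hz2 h
  nlinarith

/-- If two reals have the same bin `⌊(π - a) * 3 / π⌋`, they are within `π/3`. -/
private lemma udg_bin_close {a b : ℝ}
    (h : ⌊(Real.pi - a) * 3 / Real.pi⌋ = ⌊(Real.pi - b) * 3 / Real.pi⌋) :
    |a - b| < Real.pi / 3 := by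
  have hπ : (0:ℝ) < Real.pi := Real.pi_pos
  have hx1 := Int.lt_floor_add_one ((Real.pi - a) * 3 / Real.pi)
  have hx2 := Int.floor_le ((Real.pi - a) * 3 / Real.pi)
  have hy1 := Int.lt_floor_add_one ((Real.pi - b) * 3 / Real.pi)
  have hy2 := Int.floor_le ((Real.pi - b) * 3 / Real.pi)
  rw [h] at hx1 hx2
  have e1 : (Real.pi - a) * 3 / Real.pi - (Real.pi - b) * 3 / Real.pi
      = (b - a) * 3 / Real.pi := by field_simp; ring
  have h1' : (b - a) * 3 / Real.pi < 1 := by linarith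
  have h2' : (a - b) * 3 / Real.pi < 1 := by
    have e2 : (Real.pi - b) * 3 / Real.pi - (Real.pi - a) * 3 / Real.pi
        = (a - b) * 3 / Real.pi := by field_simp; ring
    linarith
  rw [div_lt_one hπ] at h1' h2'
  rw [abs_sub_lt_iff]
  constructor <;> linarith

/-- Bin membership: if `a ∈ (-π, π]` and `|a| > π/3`, the bin is in `{0,1,4,5}`. -/
private lemma udg_bin_mem {a : ℝ} (h1 : -Real.pi < a) (h2 : a ≤ Real.pi)
    (h3 : Real.pi / 3 < |a|) :
    ⌊(Real.pi - a) * 3 / Real.pi⌋ ∈ ({0, 1, 4, 5} : Finset ℤ) := by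
  have hπ : (0:ℝ) < Real.pi := Real.pi_pos
  simp only [Finset.mem_insert, Finset.mem_singleton]
  rcases lt_abs.mp h3 with hpos | hneg
  · -- a > π/3 : bin ∈ {0,1}
    have hge : (0:ℝ) ≤ (Real.pi - a) * 3 / Real.pi := by
      apply div_nonneg _ hπ.le; nlinarith
    have hlt : (Real.pi - a) * 3 / Real.pi < 2 := by
      rw [div_lt_iff₀ hπ]; nlinarith
    have hf0 : (0:ℤ) ≤ ⌊(Real.pi - a) * 3 / Real.pi⌋ := Int.floor_nonneg.2 hge
    have hf2 : ⌊(Real.pi - a) * 3 / Real.pi⌋ < 2 := by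
      rw [Int.floor_lt]; exact_mod_cast hlt
    omega
  · -- a < -π/3 : bin ∈ {4,5}
    have ha : a < -(Real.pi / 3) := by linarith
    have hgt : (4:ℝ) < (Real.pi - a) * 3 / Real.pi := by
      rw [lt_div_iff₀ hπ]; nlinarith
    have hlt : (Real.pi - a) * 3 / Real.pi < 6 := by
      rw [div_lt_iff₀ hπ]; nlinarith
    have hf4 : (4:ℤ) ≤ ⌊(Real.pi - a) * 3 / Real.pi⌋ := by
      rw [Int.le_floor]; push_cast; linarith
    have hf6 : ⌊(Real.pi - a) * 3 / Real.pi⌋ < 6 := by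
      rw [Int.floor_lt]; exact_mod_cast hlt
    omega

/-- If `cos a < 1/2` then `|a| > π/3`. -/
private lemma udg_abs_gt_of_cos_lt {a : ℝ} (h : Real.cos a < 1 / 2) :
    Real.pi / 3 < |a| := by
  by_contra hc
  push_neg at hc
  have h1 : Real.cos (Real.pi / 3) ≤ Real.cos |a| :=
    Real.cos_le_cos_of_nonneg_of_le_pi (abs_nonneg a)
      (by linarith [Real.pi_pos]) hc
  rw [Real.cos_pi_div_three, Real.cos_abs] at h1
  linarith

/-- The isometric embedding of `EuclideanSpace ℝ (Fin 2)` into `ℂ`. -/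
private lemma udg_dist_complex (a b : EuclideanSpace ℝ (Fin 2)) :
    dist (Complex.mk (a 0) (a 1)) (Complex.mk (b 0) (b 1)) = dist a b := by
  rw [Complex.dist_eq_re_im, EuclideanSpace.dist_eq]
  simp [Fin.sum_univ_two, Real.dist_eq, sq_abs]

theorem udg_spt_parent_adj_at_most_four
    {V : Type*} [Fintype V] (pos : V → EuclideanSpace ℝ (Fin 2))
    (hpos : Function.Injective pos)
    (G : SimpleGraph V)
    (hG : ∀ u v : V, G.Adj u v ↔ u ≠ v ∧ dist (pos u) (pos v) ≤ 1)
    (s : V) (i : ℕ) (hi : 2 ≤ i)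
    (M : Finset V) (hM : ∀ v ∈ M, G.dist s v = i)
    (hind : ∀ x ∈ M, ∀ y ∈ M, ¬ G.Adj x y)
    (u : V) (hu : G.dist s u = i - 1) :
    (M.filter (fun v => G.Adj u v)).card ≤ 4 := by
  classical
  -- find the parent w of u (a neighbour of u strictly closer to s)
  have hune : G.dist s u ≠ 0 := by omega
  obtain ⟨p, hp⟩ := SimpleGraph.exists_walk_of_dist_ne_zero hune
  have hus : u ≠ s := by
    rintro rfl
    simp [SimpleGraph.dist_self] at hu
    omega
  obtain ⟨w, hadj_uw, q, hq⟩ := p.reverse.exists_eq_cons_of_ne hus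
  have hqlen : q.length = i - 2 := by
    have h1 : p.reverse.length = i - 1 := by rw [SimpleGraph.Walk.length_reverse, hp, hu]
    rw [hq] at h1
    simp [SimpleGraph.Walk.length_cons] at h1
    omega
  have hws : G.dist s w ≤ i - 2 := by
    have h1 := SimpleGraph.dist_le q.reverse
    rw [SimpleGraph.Walk.length_reverse, hqlen] at h1
    have h2 : G.dist s w = G.dist w s := SimpleGraph.dist_comm
    omega
  -- no vertex of M is adjacent (in G) to w, nor equal to w
  have hwM : ∀ v ∈ M, ¬ G.Adj w v := by
    intro v hv hadj
    obtain ⟨r, hr⟩ := (SimpleGraph.Reachable.mono le_rfl ⟨q.reverse⟩ :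
      G.Reachable s w).exists_walk_length_eq_dist
    have hdl := SimpleGraph.dist_le (r.concat hadj)
    rw [SimpleGraph.Walk.length_concat, hr, hM v hv] at hdl
    omega
  have hwne : ∀ v ∈ M, w ≠ v := by
    intro v hv hwv
    rw [hwv] at hws
    have := hM v hv
    omega
  -- complex-plane setup
  set c : EuclideanSpace ℝ (Fin 2) → ℂ := fun p => Complex.mk (p 0) (p 1) with hc
  set z : V → ℂ := fun v => c (pos v) - c (pos u) with hz
  have habs : ∀ v₁ v₂ : V, ‖z v₁ - z v₂‖ = dist (pos v₁) (pos v₂) := by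
    intro v₁ v₂
    rw [hz]
    simp only [sub_sub_sub_cancel_right, ← Complex.dist_eq]
    exact udg_dist_complex _ _
  have habs0 : ∀ v : V, ‖z v‖ = dist (pos v) (pos u) := by
    intro v
    rw [hz, ← Complex.dist_eq]
    exact udg_dist_complex _ _
  have hzne : ∀ v : V, v ≠ u → z v ≠ 0 := by
    intro v hv hzv
    have : dist (pos v) (pos u) = 0 := by rw [← habs0 v, hzv]; simp
    exact hv (hpos (dist_eq_zero.mp this))
  -- properties of neighbours of u in M
  set F := M.filter (fun v => G.Adj u v) with hF
  have hvu : ∀ v ∈ F, v ≠ u := by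
    intro v hv
    have hvM : v ∈ M := (Finset.mem_filter.mp hv).1
    intro hvu'
    have := hM v hvM
    rw [hvu', hu] at this
    omega
  have hz1 : ∀ v ∈ F, ‖z v‖ ≤ 1 := by
    intro v hv
    have hadj := (Finset.mem_filter.mp hv).2
    rw [habs0, dist_comm]
    exact ((hG u v).mp hadj).2
  have hwu : w ≠ u := (SimpleGraph.adj_comm _ _ _ |>.mp hadj_uw).ne
  have hq1 : ‖z w‖ ≤ 1 := by
    rw [habs0, dist_comm]
    exact ((hG u w).mp hadj_uw).2
  have hqz : z w ≠ 0 := hzne w hwu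
  have hfar : ∀ v ∈ F, 1 < ‖z v - z w‖ := by
    intro v hv
    have hvM : v ∈ M := (Finset.mem_filter.mp hv).1
    rw [habs v w]
    by_contra hle
    push_neg at hle
    have : G.Adj w v := (hG w v).mpr ⟨hwne v hvM, by rwa [dist_comm]⟩
    exact hwM v hvM this
  -- the bin map
  set bin : V → ℤ :=
    fun v => ⌊(Real.pi - Complex.arg (z v * (starRingEnd ℂ) (z w))) * 3 / Real.pi⌋
    with hbin
  have hmaps : ∀ v ∈ F, bin v ∈ ({0, 1, 4, 5} : Finset ℤ) := by
    intro v hv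
    have hcos := udg_cos_arg_lt (hzne v (hvu v hv)) hqz (hz1 v hv) hq1 (hfar v hv)
    exact udg_bin_mem (Complex.neg_pi_lt_arg _) (Complex.arg_le_pi _)
      (udg_abs_gt_of_cos_lt hcos)
  have hinj : Set.InjOn bin F := by
    intro v₁ hv₁ v₂ hv₂ hb
    by_contra hne
    have hv₁M : v₁ ∈ M := (Finset.mem_filter.mp hv₁).1
    have hv₂M : v₂ ∈ M := (Finset.mem_filter.mp hv₂).1
    have hd12 : 1 < ‖z v₁ - z v₂‖ := by
      rw [habs]
      by_contra hle
      push_neg at hle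
      exact hind v₁ hv₁M v₂ hv₂M ((hG v₁ v₂).mpr
        ⟨fun h => hne h, hle⟩)
    have hcos := udg_cos_sub_arg_lt (hzne v₁ (hvu v₁ hv₁)) (hzne v₂ (hvu v₂ hv₂))
      hqz (hz1 v₁ hv₁) (hz1 v₂ hv₂) hd12
    have hclose := udg_bin_close hb
    have h1 : Real.cos (Real.pi / 3) ≤ Real.cos
        |Complex.arg (z v₁ * (starRingEnd ℂ) (z w))
          - Complex.arg (z v₂ * (starRingEnd ℂ) (z w))| :=
      Real.cos_le_cos_of_nonneg_of_le_pi (abs_nonneg _)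
        (by linarith [Real.pi_pos]) hclose.le
    rw [Real.cos_pi_div_three, Real.cos_abs] at h1
    linarith
  calc F.card ≤ ({0, 1, 4, 5} : Finset ℤ).card :=
        Finset.card_le_card_of_injOn bin hmaps hinj
    _ = 4 := by decide
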